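/- For every natural number K there exists a unique real polynomial p that is even (p(−X) = p(X)), has degree at most 2K, and satisfies p^{(k)}(1) = (−1)^k · k! for every k with 0 ≤ k ≤ K. -/

import Mathlib

open Polynomial

lemma dvd_iff_deriv (p : ℝ[X]) (n : ℕ) :
    (X - C 1) ^ n ∣ p ↔ ∀ k < n, (derivative^[k] p).eval 1 = 0 := by
  rw [X_sub_C_pow_dvd_iff, X_pow_dvd_iff]
  have h : ∀ k : ℕ, (derivative^[k] p).eval 1 = (k.factorial : ℝ) * (hasseDeriv k p).eval 1 := by
    intro k
    rw [← factorial_smul_hasseDeriv]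
    simp [nsmul_eq_mul]
  constructor
  · intro H k hk
    rw [h k, ← taylor_coeff, taylor_apply, H k hk, mul_zero]
  · intro H k hk
    have := H k hk
    rw [h k] at this
    rw [← taylor_apply, taylor_coeff]
    have hf : (k.factorial : ℝ) ≠ 0 := Nat.cast_ne_zero.mpr k.factorial_ne_zero
    exact (mul_eq_zero.mp this).resolve_left hf

lemma g_facts (K : ℕ) :
    let g : ℝ[X] := (X ^ 2 - 1) ^ (K + 1)
    g.comp (-X) = g ∧ g.degree ≤ ((2 * (K + 1) : ℕ) : WithBot ℕ) ∧
      (∀ k ≤ K, (derivative^[k] g).eval 1 = 0) ∧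
      (derivative^[K+1] g).eval 1 = ((K+1).factorial : ℝ) * 2 ^ (K + 1) := by
  intro g
  have hfac : (X ^ 2 - 1 : ℝ[X]) = (X - C 1) * (X + C 1) := by ring_nf; simp; ring
  refine ⟨?_, ?_, ?_, ?_⟩
  · simp [g, pow_comp, sub_comp, pow_comp, X_comp, one_comp, neg_pow]
  · have : g.degree ≤ (K + 1) • (2 : WithBot ℕ) := by
      apply (degree_pow_le _ _).trans
      gcongr
      simpa using (degree_X_pow_sub_C (n := 2) (by norm_num) (1 : ℝ)).le
    simpa [smul_eq_mul, mul_comm] using this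
  · have hdvd : (X - C 1) ^ (K + 1) ∣ g := by
      rw [show g = (X - C 1) ^ (K + 1) * (X + C 1) ^ (K + 1) by rw [← mul_pow, ← hfac]]
      exact Dvd.intro _ rfl
    intro k hk
    exact (dvd_iff_deriv g (K + 1)).mp hdvd k (Nat.lt_succ_of_le hk)
  · have h : (derivative^[K+1] g).eval 1
        = ((K+1).factorial : ℝ) * (hasseDeriv (K+1) g).eval 1 := by
      rw [← factorial_smul_hasseDeriv]
      simp [nsmul_eq_mul]
    rw [h, ← taylor_coeff, taylor_apply]
    have hcomp : g.comp (X + C 1) = X ^ (K+1) * (X + 2) ^ (K+1) := by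
      simp only [g, pow_comp, sub_comp, X_comp, one_comp, map_one]
      rw [← mul_pow]
      ring
    rw [hcomp]
    have := coeff_X_pow_mul ((X + 2 : ℝ[X]) ^ (K+1)) (K+1) 0
    rw [zero_add] at this
    rw [this, coeff_zero_eq_eval_zero]
    simp

lemma exists_even (K : ℕ) : ∃ p : ℝ[X], p.comp (-X) = p ∧
    p.degree ≤ ((2 * K : ℕ) : WithBot ℕ) ∧
    ∀ k ≤ K, (derivative^[k] p).eval 1 = (-1 : ℝ) ^ k * (k.factorial : ℝ) := by
  induction K with
  | zero =>
    refine ⟨1, by simp, by simpa using degree_one_le, ?_⟩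
    intro k hk
    interval_cases k
    simp
  | succ K ih =>
    obtain ⟨p, hpe, hpd, hpk⟩ := ih
    obtain ⟨hge, hgd, hgk, hgK⟩ := g_facts K
    set g : ℝ[X] := (X ^ 2 - 1) ^ (K + 1) with hg
    set c : ℝ := ((-1 : ℝ) ^ (K+1) * ((K+1).factorial : ℝ) - (derivative^[K+1] p).eval 1)
      / (((K+1).factorial : ℝ) * 2 ^ (K + 1)) with hc
    refine ⟨p + C c * g, ?_, ?_, ?_⟩
    · rw [add_comp, mul_comp, C_comp, hpe, hge]
    · apply (degree_add_le _ _).trans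
      rw [max_le_iff]
      constructor
      · apply hpd.trans
        have h2 : 2 * K ≤ 2 * (K + 1) := by omega
        exact_mod_cast h2
      · refine (degree_mul_le _ _).trans ?_
        refine le_trans (add_le_add degree_C_le hgd) ?_
        simp
    · intro k hk
      rw [iterate_map_add derivative k, eval_add, iterate_derivative_C_mul, eval_mul, eval_C]
      rcases Nat.lt_succ_iff_lt_or_eq.mp (Nat.lt_succ_of_le hk) with h | h
      · rw [hgk k (Nat.lt_succ_iff.mp h), mul_zero, add_zero]
        exact hpk k (Nat.lt_succ_iff.mp h)
      · subst h
        rw [hgK, hc]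
        have hne : (((K+1).factorial : ℝ) * 2 ^ (K + 1)) ≠ 0 := by
          positivity
        field_simp
        ring

theorem stmt_4 (K : ℕ) :
    ∃! p : Polynomial ℝ,
      p.comp (-Polynomial.X) = p ∧
      p.degree ≤ (2 * K : ℕ) ∧
      ∀ k : ℕ, k ≤ K →
        (Polynomial.derivative^[k] p).eval 1 = (-1 : ℝ) ^ k * (Nat.factorial k : ℝ) := by
  obtain ⟨p, hpe, hpd, hpk⟩ := exists_even K
  refine ⟨p, ⟨hpe, hpd, hpk⟩, ?_⟩
  rintro q ⟨hqe, hqd, hqk⟩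
  by_contra hne
  set d : ℝ[X] := q - p with hdd
  have hd0 : d ≠ 0 := sub_ne_zero.mpr hne
  have h1 : (X - C 1) ^ (K + 1) ∣ d := by
    rw [dvd_iff_deriv]
    intro k hk
    rw [hdd, iterate_derivative_sub, eval_sub, hqk k (Nat.lt_succ_iff.mp hk),
      hpk k (Nat.lt_succ_iff.mp hk), sub_self]
  have hde : d.comp (-X) = d := by rw [hdd, sub_comp, hqe, hpe]
  have h2 : (X + C 1) ^ (K + 1) ∣ d := by
    obtain ⟨r, hr⟩ := h1
    refine ⟨(-1) ^ (K+1) * r.comp (-X), ?_⟩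
    conv_lhs => rw [← hde, hr]
    rw [mul_comp, pow_comp, sub_comp, X_comp, C_comp,
      show (-X - C 1 : ℝ[X]) = -(X + C 1) by ring, neg_pow]
    ring
  have hcop : IsCoprime ((X - C 1 : ℝ[X]) ^ (K + 1)) ((X + C 1) ^ (K + 1)) := by
    have : IsCoprime (X - C 1 : ℝ[X]) (X - C (-1)) :=
      isCoprime_X_sub_C_of_isUnit_sub (by norm_num)
    simpa [sub_neg_eq_add] using this.pow
  have hdvd := hcop.mul_dvd h1 h2
  have hdeg := natDegree_le_of_dvd hdvd hd0
  have hprod : ((X - C 1 : ℝ[X]) ^ (K + 1) * (X + C 1) ^ (K + 1)).natDegree = 2 * K + 2 := by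
    rw [natDegree_mul (pow_ne_zero _ (X_sub_C_ne_zero 1)) (pow_ne_zero _ (X_add_C_ne_zero 1)),
      natDegree_pow, natDegree_pow, natDegree_X_sub_C, natDegree_X_add_C]
    ring
  have hdd2 : d.natDegree ≤ 2 * K := by
    have : d.degree ≤ ((2 * K : ℕ) : WithBot ℕ) :=
      (degree_sub_le _ _).trans (max_le hqd hpd)
    exact natDegree_le_iff_degree_le.mpr this
  omega
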